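/- Let α, β, κ be orientation-preserving homeomorphisms of ℝ with α²βα²β²α⁻¹β² = id, μ := α⁻¹β⁻² = κ^q, κ^{p−18q} = α⁻²βα⁻¹, q > 0, and suppose xκ > x and xα > x for all x ∈ ℝ. Then xα > xμ² for all x ∈ ℝ. -/
import Mathlib


/-- Step (7) in Proposition "real": if `xκ > x` and `xα > x` for all `x ∈ ℝ`,
then `xα > xμ²` for all `x ∈ ℝ`. -/
theorem alpha_dominates_mu_sq (α β κ μ : ℝ ≃o ℝ) (p q : ℤ) (hq : 0 < q)
    -- the relation α²βα²β²α⁻¹β² = 1, read as a right action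
    (hrel : ∀ x : ℝ, β (β (α.symm (β (β (α (α (β (α (α x))))))))) = x)
    -- μ = α⁻¹β⁻²
    (hμ : ∀ x : ℝ, μ x = β.symm (β.symm (α.symm x)))
    -- μ = κ^q
    (hμκ : ∀ x : ℝ, μ x = (κ ^ q) x)
    -- κ^{p-18q} = α⁻²βα⁻¹
    (hκ : ∀ x : ℝ, (κ ^ (p - 18 * q)) x = α.symm (β (α.symm (α.symm x))))
    (hκpos : ∀ x : ℝ, x < κ x) (hαpos : ∀ x : ℝ, x < α x) :
    ∀ x : ℝ, (μ ^ 2) x < α x := by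
  -- μ moves every point up
  have hMup : ∀ x : ℝ, x < μ x := by
    intro x
    rw [hμκ]
    have key : ∀ n : ℕ, ∀ y : ℝ, y ≤ (κ ^ n) y := by
      intro n
      induction n with
      | zero => intro y; simp
      | succ m ih =>
        intro y
        have hy : (κ ^ (m + 1)) y = (κ ^ m) (κ y) := by rw [pow_succ]; rfl
        rw [hy]
        exact le_trans (hκpos y).le (ih (κ y))
    have hq' : κ ^ q = κ ^ (q.toNat) := by
      rw [← zpow_natCast, Int.toNat_of_nonneg hq.le]
    rw [hq']
    obtain ⟨m, hm⟩ : ∃ m : ℕ, q.toNat = m + 1 := ⟨q.toNat - 1, by omega⟩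
    rw [hm]
    have hx : (κ ^ (m + 1)) x = (κ ^ m) (κ x) := by rw [pow_succ]; rfl
    rw [hx]
    exact lt_of_lt_of_le (hκpos x) (key m (κ x))
  -- M : x < β⁻²α⁻¹ x
  have M : ∀ x : ℝ, x < β.symm (β.symm (α.symm x)) := by
    intro x
    have := hMup x
    rwa [hμ] at this
  -- U2 : α z < β⁻² z
  have U2 : ∀ z : ℝ, α z < β.symm (β.symm z) := by
    intro z
    have h := M (α z)
    rwa [α.symm_apply_apply] at h
  -- C1 : α (β (β x)) < x
  have C1 : ∀ x : ℝ, α (β (β x)) < x := by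
    intro x
    have h := M (α (β (β x)))
    rwa [α.symm_apply_apply, β.symm_apply_apply, β.symm_apply_apply] at h
  -- C : β (β (α x)) < x
  have C : ∀ x : ℝ, β (β (α x)) < x := by
    intro x
    exact α.lt_iff_lt.mp (C1 (α x))
  -- BAB : β (α (β x)) < x
  have BAB : ∀ x : ℝ, β (α (β x)) < x := by
    intro x
    exact β.lt_iff_lt.mp (C (β x))
  -- E1 (relation, rearranged) : α²βα² = β⁻²αβ⁻² pointwise
  have E1 : ∀ x : ℝ, α (α (β (α (α x)))) = β.symm (β.symm (α (β.symm (β.symm x)))) := by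
    intro x
    have h2 := congrArg (fun t => β.symm (β.symm (α (β.symm (β.symm t))))) (hrel x)
    simp only [β.symm_apply_apply, α.apply_symm_apply] at h2
    exact h2
  -- K1 : α² y = β⁻² α β⁻² α⁻² β⁻¹ y
  have K1 : ∀ y : ℝ,
      α (α y) = β.symm (β.symm (α (β.symm (β.symm (α.symm (α.symm (β.symm y))))))) := by
    intro y
    have h := E1 (α.symm (α.symm (β.symm y)))
    rwa [α.apply_symm_apply, α.apply_symm_apply, β.apply_symm_apply] at h
  -- D : β⁻³ y < α² y
  have D : ∀ y : ℝ, β.symm (β.symm (β.symm y)) < α (α y) := by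
    intro y
    rw [K1 y]
    refine β.symm.lt_iff_lt.mpr (β.symm.lt_iff_lt.mpr ?_)
    -- goal : β.symm y < α (β.symm (β.symm (α.symm (α.symm (β.symm y)))))
    have h := U2 (α.symm (α.symm (β.symm y)))
    rw [α.apply_symm_apply] at h
    -- h : α.symm (β.symm y) < β.symm (β.symm (α.symm (α.symm (β.symm y))))
    have h2 := α.lt_iff_lt.mpr h
    rwa [α.apply_symm_apply] at h2
  -- star : μ x < β (α x)
  have star : ∀ x : ℝ, μ x < β (α x) := by
    intro x
    have h := D (α.symm x)
    rw [α.apply_symm_apply] at h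
    -- h : β.symm (β.symm (β.symm (α.symm x))) < α x
    rw [hμ, ← β.symm.lt_iff_lt, β.symm_apply_apply]
    exact h
  -- conclusion
  intro x
  have hsq : (μ ^ 2) x = μ (μ x) := by rw [pow_two]; rfl
  rw [hsq]
  have h1 := star (μ x)
  have h2 : β (α (μ x)) < β (α (β (α x))) := β.lt_iff_lt.mpr (α.lt_iff_lt.mpr (star x))
  have h3 := BAB (α x)
  linarith
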